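/- Let p be prime and V ⊆ (Z/pZ)^r finite. Suppose for every nonzero u ∈ (Z/pZ)^r, |∑_{z ∈ V} e^{2πi(u·z)/p}| ≤ K. Let B be a box of intervals with vol(B) > K²·p^{2r}/|V|². Then there exists x ∈ (Z/pZ)^r with N_{B_x}(V) ≥ 1; in fact the number of x with N_{B_x}(V) = 0 is at most K²·vol(B)·p^{2r}/(|V|²·vol(B)²) = K²·p^{2r}/(|V|²·vol(B)). -/

import Mathlib

open Finset

/-- The standard additive character `e_p(t) = e^{2πi t/p}` on `ZMod p`. -/
noncomputable def ep (p : ℕ) (t : ZMod p) : ℂ :=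
  Complex.exp (2 * Real.pi * Complex.I * t.val / p)

/-- The interval `{a, a+1, ..., a+L-1}` of `L` consecutive residues mod `p`. -/
def interval (p : ℕ) (a : ZMod p) (L : ℕ) : Finset (ZMod p) :=
  (Finset.range L).image fun m : ℕ => a + (m : ZMod p)

open scoped ComplexConjugate

namespace Stmt12

variable {p : ℕ} [NeZero p]

noncomputable def zeta (p : ℕ) : ℂ := Complex.exp (2 * Real.pi * Complex.I / p)

lemma zeta_pow_p : zeta p ^ p = 1 := by
  rw [zeta, ← Complex.exp_nat_mul]
  have hp : (p:ℂ) ≠ 0 := Nat.cast_ne_zero.mpr (NeZero.ne p)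
  rw [show (p:ℂ) * (2 * Real.pi * Complex.I / p) = 2 * Real.pi * Complex.I by field_simp]
  exact Complex.exp_two_pi_mul_I

lemma zeta_pow_mod (n : ℕ) : zeta p ^ (n % p) = zeta p ^ n := by
  conv_rhs => rw [← Nat.div_add_mod n p]
  rw [pow_add, pow_mul, zeta_pow_p, one_pow, one_mul]

lemma ep_eq (t : ZMod p) : ep p t = zeta p ^ t.val := by
  rw [ep, zeta, ← Complex.exp_nat_mul]
  ring_nf

lemma ep_zero : ep p (0 : ZMod p) = 1 := by
  simp [ep_eq, ZMod.val_zero]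

lemma ep_add (s t : ZMod p) : ep p (s + t) = ep p s * ep p t := by
  rw [ep_eq, ep_eq, ep_eq, ← pow_add, ZMod.val_add, zeta_pow_mod]

lemma ep_ne_zero (t : ZMod p) : ep p t ≠ 0 := by
  rw [ep]; exact Complex.exp_ne_zero _

lemma ep_conj (t : ZMod p) : conj (ep p t) = ep p (-t) := by
  have h1 : ep p t * ep p (-t) = 1 := by
    rw [← ep_add]; simp [ep_zero]
  have habs : ‖ep p t‖ = 1 := by
    rw [show ep p t = Complex.exp (((2 * Real.pi * t.val / p : ℝ) : ℂ) * Complex.I) by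
      rw [ep]; congr 1; push_cast; ring]
    exact Complex.norm_exp_ofReal_mul_I _
  have h2 : ep p t * conj (ep p t) = 1 := by
    rw [Complex.mul_conj, Complex.normSq_eq_norm_sq, habs]; norm_num
  exact mul_left_cancel₀ (ep_ne_zero t) (h2.trans h1.symm)

lemma ep_sum {ι : Type*} (s : Finset ι) (f : ι → ZMod p) :
    ep p (∑ i ∈ s, f i) = ∏ i ∈ s, ep p (f i) := by
  classical
  induction s using Finset.induction with
  | empty => simp [ep_zero]
  | insert _ _ h ih => rw [sum_insert h, prod_insert h, ep_add, ih]

lemma orth1 (hp : p.Prime) (t : ZMod p) :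
    ∑ c : ZMod p, ep p (c * t) = if t = 0 then (p:ℂ) else 0 := by
  by_cases ht : t = 0
  · simp [ht, ep_zero, ZMod.card]
  · simp only [ht, if_false]
    set z : ℂ := zeta p ^ t.val with hz
    have hzp : z ^ p = 1 := by
      rw [hz, ← pow_mul, mul_comm, pow_mul, zeta_pow_p, one_pow]
    have hvpos : 0 < t.val := Nat.pos_of_ne_zero (fun h => ht (by
      rwa [← ZMod.val_eq_zero]))
    have hvlt : t.val < p := ZMod.val_lt t
    have hz1 : z ≠ 1 := by
      intro h
      have hzz : Complex.exp ((t.val : ℂ) * (2 * Real.pi * Complex.I / p)) = 1 := by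
        rw [Complex.exp_nat_mul]; exact h
      rw [Complex.exp_eq_one_iff] at hzz
      obtain ⟨n, hn⟩ := hzz
      have hpne : (p:ℂ) ≠ 0 := Nat.cast_ne_zero.mpr (NeZero.ne p)
      have h2pi : (2 * (Real.pi:ℂ) * Complex.I) ≠ 0 := by
        simp [Real.pi_ne_zero, Complex.I_ne_zero]
      have hval : (t.val : ℂ) = n * p := by
        have hcancel : ((t.val:ℂ)/p) * (2 * (Real.pi:ℂ) * Complex.I)
            = (n:ℂ) * (2 * (Real.pi:ℂ) * Complex.I) := by rw [← hn]; ring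
        have hdiv := mul_right_cancel₀ h2pi hcancel
        rw [← hdiv]; field_simp
      have hvint : (t.val : ℤ) = n * p := by exact_mod_cast hval
      have hdvd : (p:ℤ) ∣ (t.val : ℤ) := ⟨n, by linarith [hvint]⟩
      have hdvd' : p ∣ t.val := Int.natCast_dvd_natCast.mp hdvd
      have := Nat.eq_zero_of_dvd_of_lt hdvd' hvlt
      omega
    have hsum : ∑ c : ZMod p, ep p (c * t) = ∑ k ∈ range p, z ^ k := by
      refine Finset.sum_nbij' (fun c => c.val) (fun k => (k : ZMod p)) ?_ ?_ ?_ ?_ ?_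
      · intro c _; exact mem_range.mpr (ZMod.val_lt c)
      · intro k _; exact mem_univ _
      · intro c _; exact ZMod.natCast_zmod_val c
      · intro k hk; exact ZMod.val_cast_of_lt (mem_range.mp hk)
      · intro c _
        rw [ep_eq, ZMod.val_mul, zeta_pow_mod, hz, ← pow_mul, mul_comm c.val t.val, pow_mul]
    rw [hsum, geom_sum_eq hz1, hzp]
    simp

variable {r : ℕ}

set_option maxHeartbeats 1000000 in
lemma orthG (hp : p.Prime) (t : Fin r → ZMod p) :
    ∑ u : Fin r → ZMod p, ep p (∑ i, u i * t i) = if t = 0 then (p:ℂ)^r else 0 := by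
  calc ∑ u : Fin r → ZMod p, ep p (∑ i, u i * t i)
      = ∑ u ∈ Fintype.piFinset (fun _ : Fin r => (univ : Finset (ZMod p))),
          ∏ i, ep p (u i * t i) := by
        rw [Fintype.piFinset_univ]; exact Finset.sum_congr rfl (fun u _ => ep_sum _ _)
    _ = ∏ i, ∑ c : ZMod p, ep p (c * t i) := by rw [Finset.prod_univ_sum]
    _ = ∏ i, (if t i = 0 then (p:ℂ) else 0) :=
        Finset.prod_congr rfl (fun i _ => orth1 hp _)
    _ = if t = 0 then (p:ℂ)^r else 0 := by
        by_cases ht : t = 0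
        · simp [ht, Pi.zero_apply]
        · rw [if_neg ht]
          obtain ⟨i, hi⟩ : ∃ i, t i ≠ 0 := by
            by_contra h; push_neg at h; exact ht (funext h)
          exact Finset.prod_eq_zero (mem_univ i) (by simp [hi])

lemma planch (hp : p.Prime) {α : Type*} [DecidableEq α] (S : Finset α)
    (g : α → (Fin r → ZMod p)) :
    ∑ u : Fin r → ZMod p,
        ((∑ s ∈ S, ep p (∑ i, u i * g s i)) * conj (∑ s ∈ S, ep p (∑ i, u i * g s i)))
      = (p:ℂ)^r * (((S ×ˢ S).filter fun q => g q.1 = g q.2).card : ℂ) := by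
  have key : ∀ u : Fin r → ZMod p,
      (∑ s ∈ S, ep p (∑ i, u i * g s i)) * conj (∑ s ∈ S, ep p (∑ i, u i * g s i))
      = ∑ q ∈ S ×ˢ S, ep p (∑ i, u i * (g q.1 i - g q.2 i)) := by
    intro u
    rw [map_sum, Finset.sum_mul_sum, ← Finset.sum_product']
    refine Finset.sum_congr rfl fun q _ => ?_
    rw [ep_conj, ← ep_add]
    congr 1
    have : ∑ i, u i * (g q.1 i - g q.2 i)
        = ∑ i, u i * g q.1 i - ∑ i, u i * g q.2 i := by
      rw [← Finset.sum_sub_distrib]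
      exact Finset.sum_congr rfl (fun i _ => mul_sub _ _ _)
    rw [this]; ring
  calc ∑ u : Fin r → ZMod p,
        ((∑ s ∈ S, ep p (∑ i, u i * g s i)) * conj (∑ s ∈ S, ep p (∑ i, u i * g s i)))
      = ∑ q ∈ S ×ˢ S, ∑ u : Fin r → ZMod p, ep p (∑ i, u i * (g q.1 i - g q.2 i)) := by
        rw [← Finset.sum_comm]; exact Finset.sum_congr rfl (fun u _ => key u)
    _ = ∑ q ∈ S ×ˢ S, (if g q.1 = g q.2 then (p:ℂ)^r else 0) := by
        refine Finset.sum_congr rfl fun q _ => ?_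
        rw [orthG hp]
        congr 1
        simp only [eq_iff_iff]
        constructor
        · intro h; funext i; have := congrFun h i; simpa [sub_eq_zero] using this
        · intro h; funext i; simp [h]
    _ = (p:ℂ)^r * (((S ×ˢ S).filter fun q => g q.1 = g q.2).card : ℂ) := by
        rw [← Finset.sum_filter, Finset.sum_const, nsmul_eq_mul, mul_comm]


lemma card_interval {a : ZMod p} {L : ℕ} (hL : L ≤ p) : (interval p a L).card = L := by
  rw [interval, Finset.card_image_of_injOn, Finset.card_range]
  intro m1 h1 m2 h2 h
  have h1' := Finset.mem_range.mp h1
  have h2' := Finset.mem_range.mp h2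
  have : (m1 : ZMod p) = (m2 : ZMod p) := by
    have := add_left_cancel h
    exact this
  have := (ZMod.natCast_eq_natCast_iff' m1 m2 p).mp this
  rwa [Nat.mod_eq_of_lt (lt_of_lt_of_le h1' hL), Nat.mod_eq_of_lt (lt_of_lt_of_le h2' hL)] at this

lemma sq_count {β : Type*} [DecidableEq β] [Fintype β] {α : Type*} [DecidableEq α]
    (Q : Finset α) (g : α → β) :
    ∑ x : β, ((Q.filter fun q => g q = x).card)^2
      = ((Q ×ˢ Q).filter fun qq => g qq.1 = g qq.2).card := by
  have h1 : ∀ x : β, ((Q.filter fun q => g q = x).card)^2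
      = ((Q ×ˢ Q).filter fun qq => g qq.1 = x ∧ g qq.2 = x).card := by
    intro x
    rw [sq, ← Finset.card_product, ← Finset.filter_product]
  rw [Finset.sum_congr rfl (fun x _ => h1 x),
    Finset.card_eq_sum_card_fiberwise
      (f := fun qq : α × α => g qq.1) (t := univ) (fun _ _ => mem_univ _)]
  refine Finset.sum_congr rfl fun x _ => ?_
  rw [Finset.filter_filter]
  congr 1
  apply Finset.filter_congr
  intro qq _
  constructor
  · rintro ⟨h1, h2⟩; exact ⟨h1.trans h2.symm, h1⟩
  · rintro ⟨h1, h2⟩; exact ⟨h2, h1.symm.trans h2⟩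

lemma fiber_sum {β : Type*} [DecidableEq β] [Fintype β] {α : Type*} (Q : Finset α) (g : α → β) :
    ∑ x : β, (Q.filter fun q => g q = x).card = Q.card :=
  (Finset.card_eq_sum_card_fiberwise (fun _ _ => mem_univ _)).symm

end Stmt12

set_option maxHeartbeats 2000000 in
theorem stmt_12 (p r : ℕ) (hp : p.Prime) [NeZero p] (hr : 1 ≤ r)
    (V : Finset (Fin r → ZMod p)) (hVpos : 0 < V.card) (K : ℝ)
    (hK : ∀ u : Fin r → ZMod p, u ≠ 0 →
      ‖∑ z ∈ V, ep p (∑ i, u i * z i)‖ ≤ K)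
    (a : Fin r → ZMod p) (L : Fin r → ℕ) (hL : ∀ i, L i ≤ p)
    (hvol : K ^ 2 * (p : ℝ) ^ (2 * r) / (V.card : ℝ) ^ 2 < ∏ i, (L i : ℝ)) :
    (∃ x : Fin r → ZMod p,
        1 ≤ (V.filter fun v => ∀ i, v i - x i ∈ interval p (a i) (L i)).card) ∧
      (((Finset.univ.filter fun x : Fin r → ZMod p =>
          (V.filter fun v => ∀ i, v i - x i ∈ interval p (a i) (L i)).card = 0).card : ℝ) ≤
        K ^ 2 * (p : ℝ) ^ (2 * r) / ((V.card : ℝ) ^ 2 * ∏ i, (L i : ℝ))) := by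
  have hppos : (0:ℝ) < p := by exact_mod_cast hp.pos
  set B : Finset (Fin r → ZMod p) := Fintype.piFinset (fun i => interval p (a i) (L i)) with hBdef
  have hBcard : B.card = ∏ i, L i := by
    rw [hBdef, Fintype.card_piFinset]
    exact Finset.prod_congr rfl fun i _ => Stmt12.card_interval (hL i)
  set N : (Fin r → ZMod p) → ℕ :=
    (fun x => (V.filter fun v => ∀ i, v i - x i ∈ interval p (a i) (L i)).card) with hNdef
  set Q : Finset ((Fin r → ZMod p) × (Fin r → ZMod p)) := V ×ˢ B with hQdef
  -- bridge between N and fibers of (v, b) ↦ v - b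
  have hbridge : ∀ x, N x = (Q.filter fun q => q.1 - q.2 = x).card := by
    intro x
    refine Finset.card_nbij' (fun v => (v, v - x)) (fun q => q.1) ?_ ?_ ?_ ?_
    · intro v hv
      rw [Finset.mem_coe, Finset.mem_filter] at hv ⊢
      refine ⟨Finset.mem_product.mpr ⟨hv.1, ?_⟩, sub_sub_cancel v x⟩
      rw [Fintype.mem_piFinset]
      exact hv.2
    · intro q hq
      rw [Finset.mem_coe, Finset.mem_filter] at hq
      obtain ⟨hqm, hqx⟩ := hq
      obtain ⟨hq1, hq2⟩ := Finset.mem_product.mp hqm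
      rw [Finset.mem_coe, Finset.mem_filter]
      refine ⟨hq1, fun i => ?_⟩
      have h2 : q.2 = q.1 - x := by rw [← hqx]; abel
      have h3 := (Fintype.mem_piFinset.mp hq2) i
      rw [h2] at h3
      exact h3
    · intro v _; rfl
    · intro q hq
      rw [Finset.mem_coe, Finset.mem_filter] at hq
      have h2 : q.2 = q.1 - x := by rw [← hq.2]; abel
      exact Prod.ext rfl h2.symm
  -- real parameters
  set n : ℝ := (p:ℝ)^r with hndef
  set m : ℝ := (B.card : ℝ) with hmdef
  set Vc : ℝ := (V.card : ℝ) with hVcdef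
  have hmprod : m = ∏ i, (L i : ℝ) := by rw [hmdef, hBcard]; push_cast; rfl
  have hnpos : 0 < n := by positivity
  have hVcpos : 0 < Vc := by rw [hVcdef]; exact_mod_cast hVpos
  have hmpos : 0 < m := by
    rw [hmprod]; exact lt_of_le_of_lt (by positivity) hvol
  -- Fourier sums
  set TV : (Fin r → ZMod p) → ℂ := fun u => ∑ z ∈ V, ep p (∑ i, u i * z i) with hTVdef
  set TB : (Fin r → ZMod p) → ℂ := fun u => ∑ b ∈ B, ep p (∑ i, u i * b i) with hTBdef
  -- factorization of the Q-sum
  have hfac : ∀ u : Fin r → ZMod p,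
      (∑ s ∈ Q, ep p (∑ i, u i * (s.1 - s.2) i)) = TV u * (starRingEnd ℂ) (TB u) := by
    intro u
    show _ = (∑ z ∈ V, ep p (∑ i, u i * z i)) * (starRingEnd ℂ) (∑ b ∈ B, ep p (∑ i, u i * b i))
    rw [map_sum, Finset.sum_mul_sum, hQdef, ← Finset.sum_product']
    refine Finset.sum_congr rfl fun q _ => ?_
    rw [Stmt12.ep_conj, ← Stmt12.ep_add]
    congr 1
    simp only [Pi.sub_apply, mul_sub]
    rw [Finset.sum_sub_distrib]
    ring
  -- first Plancherel identity
  have E1 : n * ∑ x : Fin r → ZMod p, ((N x : ℝ))^2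
      = ∑ u : Fin r → ZMod p, Complex.normSq (TV u) * Complex.normSq (TB u) := by
    have hplanch := Stmt12.planch hp Q (fun q => q.1 - q.2)
    have hLHS : ∑ u : Fin r → ZMod p,
        ((∑ s ∈ Q, ep p (∑ i, u i * (s.1 - s.2) i))
          * (starRingEnd ℂ) (∑ s ∈ Q, ep p (∑ i, u i * (s.1 - s.2) i)))
        = ∑ u : Fin r → ZMod p,
            (((Complex.normSq (TV u) * Complex.normSq (TB u) : ℝ)) : ℂ) := by
      refine Finset.sum_congr rfl fun u _ => ?_
      rw [hfac u, Complex.mul_conj, Complex.normSq_mul, Complex.normSq_conj]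
    rw [hLHS] at hplanch
    have hC : ((Q ×ˢ Q).filter fun qq => qq.1.1 - qq.1.2 = qq.2.1 - qq.2.2).card
        = ∑ x : Fin r → ZMod p, (N x)^2 := by
      rw [Finset.sum_congr rfl (fun x _ => congrArg (·^2) (hbridge x))]
      exact (Stmt12.sq_count Q (fun q => q.1 - q.2)).symm
    rw [hC] at hplanch
    rw [hndef]
    exact_mod_cast hplanch.symm
  -- second Plancherel identity
  have E2 : ∑ u : Fin r → ZMod p, Complex.normSq (TB u) = n * m := by
    have hplanch := Stmt12.planch hp B (fun b => b)
    have hLHS : ∑ u : Fin r → ZMod p,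
        ((∑ s ∈ B, ep p (∑ i, u i * s i)) * (starRingEnd ℂ) (∑ s ∈ B, ep p (∑ i, u i * s i)))
        = ∑ u : Fin r → ZMod p, ((Complex.normSq (TB u) : ℝ) : ℂ) := by
      refine Finset.sum_congr rfl fun u _ => ?_
      exact Complex.mul_conj _
    rw [hLHS] at hplanch
    have hD : ((B ×ˢ B).filter fun qq => qq.1 = qq.2).card = B.card := by
      refine Finset.card_nbij' (fun q => q.1) (fun b => (b, b)) ?_ ?_ ?_ ?_
      · intro q hq; exact (Finset.mem_product.mp (Finset.mem_filter.mp hq).1).1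
      · intro b hb; exact Finset.mem_filter.mpr ⟨Finset.mem_product.mpr ⟨hb, hb⟩, rfl⟩
      · intro q hq; exact Prod.ext rfl (Finset.mem_filter.mp hq).2
      · intro b _; rfl
    rw [hD] at hplanch
    rw [hndef, hmdef]
    exact_mod_cast hplanch
  -- value at u = 0
  have hTV0 : TV 0 = (V.card : ℂ) := by
    simp only [hTVdef]
    simp [Stmt12.ep_zero]
  have hTB0 : TB 0 = (B.card : ℂ) := by
    simp only [hTBdef]
    simp [Stmt12.ep_zero]
  have hTV0n : Complex.normSq (TV 0) = Vc^2 := by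
    rw [hTV0, hVcdef, Complex.normSq_natCast]; ring
  have hTB0n : Complex.normSq (TB 0) = m^2 := by
    rw [hTB0, hmdef, Complex.normSq_natCast]; ring
  -- key second moment bound
  have key : n * ∑ x : Fin r → ZMod p, ((N x : ℝ))^2 ≤ Vc^2 * m^2 + K^2 * (n * m) := by
    rw [E1, ← Finset.add_sum_erase _ _ (Finset.mem_univ (0 : Fin r → ZMod p)),
      hTV0n, hTB0n]
    have hbound : ∑ u ∈ Finset.univ.erase (0 : Fin r → ZMod p),
        Complex.normSq (TV u) * Complex.normSq (TB u)
        ≤ K^2 * ∑ u ∈ Finset.univ.erase (0 : Fin r → ZMod p), Complex.normSq (TB u) := by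
      rw [Finset.mul_sum]
      refine Finset.sum_le_sum fun u hu => ?_
      have hu0 : u ≠ 0 := Finset.ne_of_mem_erase hu
      have h1 : Complex.normSq (TV u) ≤ K^2 := by
        rw [Complex.normSq_eq_norm_sq]
        have h6 : ‖TV u‖ ≤ K := hK u hu0
        exact pow_le_pow_left₀ (norm_nonneg _) h6 2
      exact mul_le_mul_of_nonneg_right h1 (Complex.normSq_nonneg _)
    have hsub : ∑ u ∈ Finset.univ.erase (0 : Fin r → ZMod p), Complex.normSq (TB u)
        ≤ ∑ u : Fin r → ZMod p, Complex.normSq (TB u) :=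
      Finset.sum_le_sum_of_subset_of_nonneg (Finset.erase_subset _ _)
        (fun u _ _ => Complex.normSq_nonneg _)
    rw [E2] at hsub
    nlinarith [hbound, hsub]
  -- first moment
  have hS1 : ∑ x : Fin r → ZMod p, ((N x : ℝ)) = Vc * m := by
    have h1 : ∑ x : Fin r → ZMod p, N x = Q.card := by
      rw [Finset.sum_congr rfl (fun x _ => hbridge x)]
      exact Stmt12.fiber_sum Q (fun q => q.1 - q.2)
    have hQc : Q.card = V.card * B.card := Finset.card_product _ _
    rw [hVcdef, hmdef, ← Nat.cast_mul, ← hQc, ← h1, Nat.cast_sum]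
  -- the mean
  set μ : ℝ := Vc * m / n with hμdef
  have hμpos : 0 < μ := by positivity
  have hnμ : n * μ = Vc * m := by rw [hμdef]; field_simp
  have hcardG : ((Fintype.card (Fin r → ZMod p)) : ℝ) = n := by
    rw [hndef]
    simp [ZMod.card]
  -- variance bound
  have hvar : ∑ x : Fin r → ZMod p, ((N x : ℝ) - μ)^2 ≤ K^2 * m := by
    have hexp : ∑ x : Fin r → ZMod p, ((N x : ℝ) - μ)^2
        = (∑ x : Fin r → ZMod p, ((N x : ℝ))^2) - 2*μ*(Vc*m) + n*μ^2 := by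
      have h1 : ∀ x : Fin r → ZMod p, ((N x : ℝ) - μ)^2
          = ((N x:ℝ))^2 - 2*μ*(N x:ℝ) + μ^2 := fun x => by ring
      rw [Finset.sum_congr rfl fun x _ => h1 x]
      rw [Finset.sum_add_distrib, Finset.sum_sub_distrib, ← Finset.mul_sum, hS1,
        Finset.sum_const, nsmul_eq_mul, Finset.card_univ, hcardG]
    rw [hexp]
    have h2 : n * (2*μ*(Vc*m)) = 2 * (Vc*m)^2 := by
      rw [← hnμ]; ring
    have h3 : n * (n*μ^2) = (Vc*m)^2 := by
      rw [show n*(n*μ^2) = (n*μ)^2 from by ring, hnμ]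
    have h4 : n * ((∑ x : Fin r → ZMod p, ((N x : ℝ))^2) - 2*μ*(Vc*m) + n*μ^2)
        ≤ n * (K^2*m) := by
      rw [mul_add, mul_sub, h2, h3]
      nlinarith [key]
    exact le_of_mul_le_mul_left h4 hnpos
  -- Chebyshev
  set Z : ℕ := (Finset.univ.filter fun x : Fin r → ZMod p => N x = 0).card with hZdef
  have hcheb : (Z:ℝ) * μ^2 ≤ K^2 * m := by
    have h1 : ∑ x ∈ Finset.univ.filter (fun x : Fin r → ZMod p => N x = 0), ((N x:ℝ) - μ)^2
        = (Z:ℝ) * μ^2 := by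
      rw [Finset.sum_congr rfl (fun x hx =>
        show ((N x:ℝ) - μ)^2 = μ^2 by
          rw [(Finset.mem_filter.mp hx).2]
          push_cast
          ring)]
      rw [Finset.sum_const, nsmul_eq_mul, ← hZdef]
    rw [← h1]
    calc ∑ x ∈ Finset.univ.filter (fun x : Fin r → ZMod p => N x = 0), ((N x:ℝ) - μ)^2
        ≤ ∑ x : Fin r → ZMod p, ((N x : ℝ) - μ)^2 :=
          Finset.sum_le_sum_of_subset_of_nonneg (Finset.filter_subset _ _)
            (fun x _ _ => sq_nonneg _)
      _ ≤ K^2 * m := hvar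
  have hn2 : n^2 = (p:ℝ)^(2*r) := by
    rw [hndef, ← pow_mul, mul_comm]
  -- conclusion (2)
  have hZle : (Z:ℝ) ≤ K ^ 2 * (p : ℝ) ^ (2 * r) / (Vc ^ 2 * m) := by
    rw [le_div_iff₀ (by positivity)]
    have h3 : (Z:ℝ) * (Vc^2*m) * m ≤ (K^2 * (p:ℝ)^(2*r)) * m := by
      have h4 : (Z:ℝ) * (Vc^2*m) * m = (Z:ℝ) * μ^2 * n^2 := by
        rw [show (Z:ℝ)*(Vc^2*m)*m = (Z:ℝ)*(Vc*m)^2 from by ring, ← hnμ]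
        ring
      rw [h4, ← hn2]
      nlinarith [hcheb, sq_nonneg n, hnpos, hmpos]
    exact le_of_mul_le_mul_right h3 hmpos
  have hZlt1 : (Z:ℝ) < 1 := by
    have h2 : K ^ 2 * (p : ℝ) ^ (2 * r) / (Vc ^ 2 * m) < 1 := by
      rw [← div_div, div_lt_one hmpos, hmprod]
      exact hvol
    linarith [hZle]
  have hZ0 : Z = 0 := by
    have : Z < 1 := by exact_mod_cast hZlt1
    omega
  have hall : ∀ x : Fin r → ZMod p, N x ≠ 0 := by
    intro x hx
    have hxmem : x ∈ Finset.univ.filter (fun x : Fin r → ZMod p => N x = 0) :=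
      Finset.mem_filter.mpr ⟨Finset.mem_univ x, hx⟩
    have := Finset.card_pos.mpr ⟨x, hxmem⟩
    rw [← hZdef] at this
    omega
  constructor
  · exact ⟨fun _ => 0, Nat.one_le_iff_ne_zero.mpr (hall _)⟩
  · have h5 := hZle
    rw [hmprod] at h5
    exact h5
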